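/- arXiv:2504.15816 — 2 statements merged into one kernel-verified Lean document; each statement's English description precedes it below -/
import Mathlib

section
/- For every β > 0 and every real x, the binary entropy of the Fermi-Dirac occupation, g(x) := −f_β(x) log f_β(x) − (1 − f_β(x)) log(1 − f_β(x)) with f_β(x) = 1/(1+e^{βx}), satisfies g(x) ≤ e^{−β|x|/3}. -/
lemma ent_le_of_nonneg (t : ℝ) (ht : 0 ≤ t) :
    -(1 / (1 + Real.exp t)) * Real.log (1 / (1 + Real.exp t))
      - (1 - 1 / (1 + Real.exp t)) * Real.log (1 - 1 / (1 + Real.exp t))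
      ≤ Real.exp (-t / 3) := by
  set E := Real.exp t with hE
  have hE0 : 0 < E := Real.exp_pos t
  set v := Real.exp (-t / 3) with hv
  have hv0 : 0 < v := Real.exp_pos _
  have hv1 : v ≤ 1 := by
    have := Real.exp_le_exp.mpr (show -t / 3 ≤ 0 by linarith)
    rwa [Real.exp_zero] at this
  have hv3 : v ^ 3 * E = 1 := by
    rw [hv, hE, ← Real.exp_nat_mul, ← Real.exp_add]
    norm_num
    ring
  have hden : (0:ℝ) < 1 + E := by linarith
  have hv3pos : (0:ℝ) < 1 + v ^ 3 := by positivity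
  have h1f : 1 - 1 / (1 + E) = E / (1 + E) := by field_simp; ring
  have hlogf : Real.log (1 / (1 + E)) = -Real.log (1 + E) := by
    rw [one_div, Real.log_inv]
  have hlog1f : Real.log (E / (1 + E)) = t - Real.log (1 + E) := by
    rw [Real.log_div (ne_of_gt hE0) (ne_of_gt hden), hE, Real.log_exp]
  have hgoal_eq :
      -(1 / (1 + E)) * Real.log (1 / (1 + E))
        - (1 - 1 / (1 + E)) * Real.log (1 - 1 / (1 + E))
      = Real.log (1 + E) - E / (1 + E) * t := by
    rw [h1f, hlogf, hlog1f]
    field_simp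
    ring
  rw [hgoal_eq]
  -- log (1+E) = t + log (1 + v^3)
  have hlog_split : Real.log (1 + E) = t + Real.log (1 + v ^ 3) := by
    have h1 : 1 + E = E * (1 + v ^ 3) := by ring_nf; nlinarith [hv3]
    rw [h1, Real.log_mul (ne_of_gt hE0) (ne_of_gt hv3pos), hE, Real.log_exp]
  have hlog_le : Real.log (1 + v ^ 3) ≤ v ^ 3 := by
    have := Real.log_le_sub_one_of_pos hv3pos
    linarith
  -- t * v ≤ 3 * (1 - v)
  have htv : t * v ≤ 3 * (1 - v) := by
    have h1 : Real.log v = -t / 3 := by rw [hv, Real.log_exp]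
    have h2 : Real.log (1 / v) ≤ 1 / v - 1 := Real.log_le_sub_one_of_pos (by positivity)
    rw [one_div, Real.log_inv, h1] at h2
    have h3 : t / 3 ≤ v⁻¹ - 1 := by linarith
    have h4 : (t / 3) * v ≤ (v⁻¹ - 1) * v := mul_le_mul_of_nonneg_right h3 hv0.le
    have h5 : (v⁻¹ - 1) * v = 1 - v := by field_simp
    rw [h5] at h4
    linarith
  -- 1/(1+E) = v^3/(1+v^3)
  have hf_eq : 1 / (1 + E) = v ^ 3 / (1 + v ^ 3) := by
    rw [div_eq_div_iff hden.ne' hv3pos.ne']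
    nlinarith [hv3]
  have hstep : Real.log (1 + E) - E / (1 + E) * t
      = Real.log (1 + v ^ 3) + t * (v ^ 3 / (1 + v ^ 3)) := by
    rw [hlog_split, ← hf_eq]
    field_simp
    ring
  rw [hstep]
  have hq : t * v ^ 3 ≤ 3 * (1 - v) * v ^ 2 := by
    nlinarith [mul_le_mul_of_nonneg_right htv (sq_nonneg v)]
  have h6 : t * v ^ 3 / (1 + v ^ 3) ≤ 3 * (1 - v) * v ^ 2 / (1 + v ^ 3) := by
    gcongr
  have hmd : t * (v ^ 3 / (1 + v ^ 3)) = t * v ^ 3 / (1 + v ^ 3) := by ring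
  have h7 : 3 * (1 - v) * v ^ 2 / (1 + v ^ 3) ≤ v - v ^ 3 := by
    rw [div_le_iff₀ hv3pos]
    nlinarith [mul_nonneg (mul_nonneg hv0.le (sub_nonneg.2 hv1)) (sq_nonneg (v ^ 2 + v - 1)),
      mul_nonneg (mul_nonneg (sq_nonneg v) hv0.le) (sq_nonneg (1 - v))]
  linarith [hlog_le, hmd ▸ h6]

lemma ent_symm (s : ℝ) :
    -(1 / (1 + Real.exp (-s))) * Real.log (1 / (1 + Real.exp (-s)))
      - (1 - 1 / (1 + Real.exp (-s))) * Real.log (1 - 1 / (1 + Real.exp (-s)))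
    = -(1 / (1 + Real.exp s)) * Real.log (1 / (1 + Real.exp s))
      - (1 - 1 / (1 + Real.exp s)) * Real.log (1 - 1 / (1 + Real.exp s)) := by
  have hE : (0:ℝ) < Real.exp s := Real.exp_pos s
  have h1 : 1 - 1 / (1 + Real.exp (-s)) = 1 / (1 + Real.exp s) := by
    rw [Real.exp_neg]
    field_simp
    ring
  have h2 : 1 - 1 / (1 + Real.exp s) = 1 / (1 + Real.exp (-s)) := by
    rw [Real.exp_neg]
    field_simp
    ring
  rw [h1, h2]
  ring

theorem stmt5 (β x : ℝ) (hβ : 0 < β) :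
    -(1 / (1 + Real.exp (β * x))) * Real.log (1 / (1 + Real.exp (β * x)))
      - (1 - 1 / (1 + Real.exp (β * x))) * Real.log (1 - 1 / (1 + Real.exp (β * x)))
      ≤ Real.exp (-(β * |x|) / 3) := by
  rcases le_or_gt 0 x with hx | hx
  · rw [abs_of_nonneg hx]
    have := ent_le_of_nonneg (β * x) (by positivity)
    simpa using this
  · rw [abs_of_neg hx]
    have hx' : β * x = -(β * -x) := by ring
    rw [hx', ent_symm (β * -x)]
    have := ent_le_of_nonneg (β * -x) (by nlinarith)
    simpa using this
end

section
/- Let C be a symmetric n×n matrix whose eigenvalues (in non-decreasing order) satisfy λ_k(C) ≥ k/c_λ for some constant c_λ > 0 and all k = 1, ..., n. Let β > 0, μ ≥ 0, and X₀ = f_β(C − μI) where f_β(x) = 1/(1+e^{βx}) is applied spectrally. Then Tr[X₀] ≤ c_λ(μ + β^{−1}) + 1. -/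
open Matrix

private lemma sum_bound_aux (cl β μ : ℝ) (hcl : 0 < cl) (hβ : 0 < β) (hμ : 0 ≤ μ) (N : ℕ) :
    ∑ k ∈ Finset.range N, min 1 (Real.exp (β * μ - β * ((k : ℝ) + 1) / cl))
      ≤ cl * (μ + β⁻¹) + 1 := by
  set m := ⌈cl * μ⌉₊ with hm
  set r := Real.exp (-(β / cl)) with hr
  have hr0 : 0 < r := Real.exp_pos _
  have ht : 0 < β / cl := div_pos hβ hcl
  have hr1 : r < 1 := by rw [hr, Real.exp_lt_one_iff]; linarith
  have hrle : r ≤ cl / (cl + β) := by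
    have h1 := Real.add_one_le_exp (β / cl)
    have h2 : r * Real.exp (β / cl) = 1 := by rw [hr, ← Real.exp_add]; simp
    have hd : cl * (β / cl) = β := by field_simp
    have h1' : cl + β ≤ cl * Real.exp (β / cl) := by nlinarith
    rw [le_div_iff₀ (by linarith)]
    nlinarith [mul_le_mul_of_nonneg_left h1' hr0.le]
  have hpt : ∀ k ∈ Finset.range N,
      min 1 (Real.exp (β * μ - β * ((k : ℝ) + 1) / cl))
        ≤ if k < m then (1 : ℝ) else r ^ (k + 1 - m) := by
    intro k _
    by_cases hk : k < m
    · simp [hk]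
    · simp only [hk, if_false]
      push_neg at hk
      refine le_trans (min_le_right _ _) ?_
      have hmk : ((k + 1 - m : ℕ) : ℝ) = (k : ℝ) + 1 - m := by
        push_cast [Nat.cast_sub (by omega : m ≤ k + 1)]; ring
      have hle : β * μ - β * ((k : ℝ) + 1) / cl ≤ -(β / cl) * ((k + 1 - m : ℕ) : ℝ) := by
        rw [hmk]
        have hcm : cl * μ ≤ (m : ℝ) := Nat.le_ceil _
        have hβμ : β * μ ≤ β * (m : ℝ) / cl := by
          rw [le_div_iff₀ hcl]; nlinarith
        have : -(β / cl) * ((k : ℝ) + 1 - m) = β * m / cl - β * ((k : ℝ) + 1) / cl := by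
          ring
        linarith
      calc Real.exp (β * μ - β * ((k : ℝ) + 1) / cl)
          ≤ Real.exp (-(β / cl) * ((k + 1 - m : ℕ) : ℝ)) := Real.exp_le_exp.mpr hle
        _ = r ^ (k + 1 - m) := by rw [mul_comm, Real.exp_nat_mul]
  refine le_trans (Finset.sum_le_sum hpt) ?_
  have hsub : ∑ k ∈ Finset.range N, (if k < m then (1:ℝ) else r ^ (k + 1 - m))
      ≤ ∑ k ∈ Finset.range (m + N), (if k < m then (1:ℝ) else r ^ (k + 1 - m)) := by
    apply Finset.sum_le_sum_of_subset_of_nonneg (Finset.range_subset_range.mpr (by omega))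
    intro i _ _; positivity
  refine le_trans hsub ?_
  rw [Finset.sum_range_add]
  have h1 : ∑ k ∈ Finset.range m, (if k < m then (1:ℝ) else r ^ (k + 1 - m)) = m := by
    rw [Finset.sum_congr rfl fun k hk => if_pos (Finset.mem_range.mp hk),
      Finset.sum_const, Finset.card_range, nsmul_eq_mul, mul_one]
  have h2 : ∑ j ∈ Finset.range N, (if m + j < m then (1:ℝ) else r ^ (m + j + 1 - m))
      = r * ∑ j ∈ Finset.range N, r ^ j := by
    rw [Finset.mul_sum]
    refine Finset.sum_congr rfl fun j _ => ?_
    rw [if_neg (by omega)]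
    have : m + j + 1 - m = j + 1 := by omega
    rw [this, pow_succ, mul_comm]
  rw [h1, h2]
  have hgeom : ∑ j ∈ Finset.range N, r ^ j ≤ 1 / (1 - r) := by
    rw [geom_sum_eq hr1.ne N]
    have heq : (r ^ N - 1) / (r - 1) = (1 - r ^ N) / (1 - r) := by
      rw [← neg_div_neg_eq]; ring_nf
    rw [heq, div_le_div_iff_of_pos_right (by linarith : (0:ℝ) < 1 - r)]
    nlinarith [pow_nonneg hr0.le N]
  have hceil : (m : ℝ) ≤ cl * μ + 1 := by
    have := Nat.ceil_lt_add_one (by positivity : (0:ℝ) ≤ cl * μ)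
    rw [hm]; linarith
  have htail : r * (1 / (1 - r)) ≤ cl * β⁻¹ := by
    rw [mul_one_div, div_le_iff₀ (by linarith)]
    have hr2 : r * (cl + β) ≤ cl := by
      calc r * (cl + β) ≤ (cl / (cl + β)) * (cl + β) :=
            mul_le_mul_of_nonneg_right hrle (by positivity)
        _ = cl := by field_simp
    have hβi : cl * β⁻¹ * β = cl := by field_simp
    nlinarith [mul_pos hcl (inv_pos.mpr hβ)]
  have hfin : r * ∑ j ∈ Finset.range N, r ^ j ≤ cl * β⁻¹ :=
    le_trans (mul_le_mul_of_nonneg_left hgeom hr0.le) htail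
  nlinarith

private lemma trace_cfc_aux {n : Type*} [Fintype n] [DecidableEq n]
    (A : Matrix n n ℝ) (hA : A.IsHermitian) (f : ℝ → ℝ) :
    (hA.cfc f).trace = ∑ i, f (hA.eigenvalues i) := by
  rw [Matrix.IsHermitian.cfc, Unitary.conjStarAlgAut_apply, Matrix.trace_mul_cycle,
    (Matrix.mem_unitaryGroup_iff').mp (Matrix.IsHermitian.eigenvectorUnitary hA).2, one_mul,
    Matrix.trace_diagonal]
  simp

private lemma cfc_shift_aux {n : Type*} [Fintype n] [DecidableEq n]
    (C : Matrix n n ℝ) (hC : C.IsHermitian)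
    (μ : ℝ) (hCμ : (C - μ • 1).IsHermitian) (β : ℝ) :
    hCμ.cfc (fun x => 1 / (1 + Real.exp (β * x)))
      = hC.cfc (fun x => 1 / (1 + Real.exp (β * (x - μ)))) := by
  have hC' : IsSelfAdjoint C := hC
  have h1 : C - μ • 1 = cfc (fun x => x - μ) C := by
    rw [cfc_sub (fun x : ℝ => x) (fun _ => μ) C (by fun_prop) (by fun_prop),
      cfc_id' ℝ C, cfc_const μ C hC']
    congr 1
    simp [Algebra.algebraMap_eq_smul_one]
  have hcont : Continuous (fun x : ℝ => 1 / (1 + Real.exp (β * x))) := by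
    fun_prop (disch := intro x; positivity)
  rw [← hCμ.cfc_eq, ← hC.cfc_eq, h1,
    ← cfc_comp (fun x : ℝ => 1 / (1 + Real.exp (β * x))) (fun x : ℝ => x - μ) C
      (hg := hcont.continuousOn) (hf := (continuous_id'.sub continuous_const).continuousOn)]
  rfl

theorem stmt16 {N : ℕ} (C : Matrix (Fin N) (Fin N) ℝ) (hC : C.IsHermitian)
    (cl β μ : ℝ) (hcl : 0 < cl) (hβ : 0 < β) (hμ : 0 ≤ μ)
    (hgrow : ∀ k : Fin N,
      ((k : ℕ) + 1 : ℝ) / cl ≤ hC.eigenvalues (Tuple.sort hC.eigenvalues k))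
    (hCμ : (C - μ • 1).IsHermitian) :
    (hCμ.cfc fun x => 1 / (1 + Real.exp (β * x))).trace ≤ cl * (μ + β⁻¹) + 1 := by
  rw [cfc_shift_aux C hC μ hCμ β, trace_cfc_aux]
  set σ : Equiv.Perm (Fin N) := Tuple.sort hC.eigenvalues with hσ
  have hsum : ∑ i, (1 / (1 + Real.exp (β * (hC.eigenvalues i - μ))))
      = ∑ k, (1 / (1 + Real.exp (β * (hC.eigenvalues (σ k) - μ)))) :=
    (Equiv.sum_comp σ fun i => 1 / (1 + Real.exp (β * (hC.eigenvalues i - μ)))).symm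
  rw [hsum]
  have hterm : ∀ k : Fin N,
      1 / (1 + Real.exp (β * (hC.eigenvalues (σ k) - μ)))
        ≤ min 1 (Real.exp (β * μ - β * ((k : ℕ) + 1 : ℝ) / cl)) := by
    intro k
    set a := hC.eigenvalues (σ k) - μ with ha
    have hexp : 0 < Real.exp (β * a) := Real.exp_pos _
    refine le_min ?_ ?_
    · rw [div_le_one (by linarith)]; linarith
    · have h1 : 1 / (1 + Real.exp (β * a)) ≤ Real.exp (-(β * a)) := by
        rw [div_le_iff₀ (by linarith)]
        have : Real.exp (-(β * a)) * Real.exp (β * a) = 1 := by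
          rw [← Real.exp_add]; simp
        nlinarith [Real.exp_pos (-(β * a))]
      refine h1.trans (Real.exp_le_exp.mpr ?_)
      have hg := hgrow k
      have : β * (((k : ℕ) + 1 : ℝ) / cl) ≤ β * (hC.eigenvalues (σ k)) :=
        mul_le_mul_of_nonneg_left hg hβ.le
      have hd : β * (((k : ℕ) + 1 : ℝ) / cl) = β * ((k : ℕ) + 1 : ℝ) / cl := by ring
      rw [ha]
      nlinarith
  refine le_trans (Finset.sum_le_sum fun k _ => hterm k) ?_
  rw [Fin.sum_univ_eq_sum_range (fun k => min 1 (Real.exp (β * μ - β * ((k : ℝ) + 1) / cl))) N]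
  exact sum_bound_aux cl β μ hcl hβ hμ N
end
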